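/- Let Ω be a simply connected, open, bounded set in ℝ² with inradius R, and let κ > 1/R. Suppose a ball B ⊆ Ω minimizes F(κ) := inf{ P(A) − κ|A| : A ⊂ Ω, |A| ≥ π R² } and that the free boundary ∂B ∩ Ω, if nonempty, must have constant curvature κ. Then B = Ω; i.e., Ω itself is a ball. -/

import Mathlib

open Real Set Metric MeasureTheory Filter

noncomputable section

/-- The Euclidean plane. -/
abbrev Plane := EuclideanSpace ℝ (Fin 2)

/-- Lebesgue measure (area) of a planar set, as a real number. -/
def area (E : Set Plane) : ℝ := (volume E).toReal

/-- The inradius of a set: the supremum of radii of balls contained in it. -/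
def inradius (Ω : Set Plane) : ℝ := sSup {r : ℝ | ∃ x : Plane, ball x r ⊆ Ω}

/-- The `p`-Cheeger ratio `P(E)/|E|^p` of a set, for a given perimeter functional `P`. -/
def cheegerRatio (P : Set Plane → ℝ) (p : ℝ) (E : Set Plane) : ℝ := P E / (area E) ^ p

/-- The `p`-Cheeger constant `H(p)` of `Ω`. -/
def cheegerConst (P : Set Plane → ℝ) (p : ℝ) (Ω : Set Plane) : ℝ :=
  sInf {c : ℝ | ∃ F, F ⊆ Ω ∧ 0 < area F ∧ c = cheegerRatio P p F}

/-- `E` is a `p`-Cheeger set of `Ω`: it is admissible and minimizes the `p`-Cheeger ratio. -/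
def IsCheegerSet (P : Set Plane → ℝ) (p : ℝ) (Ω E : Set Plane) : Prop :=
  E ⊆ Ω ∧ 0 < area E ∧
    ∀ F, F ⊆ Ω → 0 < area F → cheegerRatio P p E ≤ cheegerRatio P p F

/-- `E` is an isoperimetric set in `Ω` for its own volume. -/
def IsIsoperimetric (P : Set Plane → ℝ) (Ω E : Set Plane) : Prop :=
  E ⊆ Ω ∧ ∀ F, F ⊆ Ω → area F = area E → P E ≤ P F

/-- The prescribed-curvature infimum `F(κ)` of `Ω`. -/
def prescribedCurv (P : Set Plane → ℝ) (Ω : Set Plane) (κ : ℝ) : ℝ :=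
  sInf {c : ℝ | ∃ A, A ⊆ Ω ∧ π * (inradius Ω) ^ 2 ≤ area A ∧ c = P A - κ * area A}

/-- `Ω` has no necks of any radius. -/
def NoNecksOfAnyRadius (Ω : Set Plane) : Prop :=
  ∀ r : ℝ, 0 < r → r ≤ inradius Ω → ∀ x₀ x₁ : Plane, ball x₀ r ⊆ Ω → ball x₁ r ⊆ Ω →
    ∃ γ : ℝ → Plane, Continuous γ ∧ γ 0 = x₀ ∧ γ 1 = x₁ ∧
      ∀ t ∈ Icc (0:ℝ) 1, ball (γ t) r ⊆ Ω

/-- Let `Ω ⊂ ℝ²` be simply connected, open, bounded, with inradius `R`, and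
`κ > 1/R`. If a ball `B ⊆ Ω` minimizes `F(κ)` and its free boundary `∂B ∩ Ω`, if nonempty,
has constant curvature `κ` (the curvature of `∂B` being `1/r`), then `B = Ω`. -/
theorem stmt_13 (P : Set Plane → ℝ) (Ω : Set Plane) (hΩopen : IsOpen Ω)
    (hΩbdd : Bornology.IsBounded Ω) (hΩsc : SimplyConnectedSpace Ω)
    (hRpos : 0 < inradius Ω) (κ : ℝ) (hκ : 1 / inradius Ω < κ)
    (x : Plane) (r : ℝ) (hr : 0 < r) (B : Set Plane) (hB : B = ball x r) (hBΩ : B ⊆ Ω)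
    -- the area of the ball
    (hAball : area B = π * r ^ 2)
    -- `B` minimizes `F(κ)`
    (hadm : π * (inradius Ω) ^ 2 ≤ area B)
    (hmin : ∀ A : Set Plane, A ⊆ Ω → π * (inradius Ω) ^ 2 ≤ area A →
      P B - κ * area B ≤ P A - κ * area A)
    -- the free boundary, if nonempty, has constant curvature `κ`
    (hfb : (frontier B ∩ Ω).Nonempty → 1 / r = κ) :
    B = Ω := by
  set R := inradius Ω with hR
  -- R ≤ r from the area condition
  have hRr : R ≤ r := by
    rw [hAball] at hadm
    have h2 : R ^ 2 ≤ r ^ 2 := (mul_le_mul_iff_right₀ Real.pi_pos).mp hadm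
    nlinarith
  -- hence 1/r ≤ 1/R < κ, so the free boundary cannot have curvature κ
  have h1r : 1 / r < κ := lt_of_le_of_lt (by
    apply one_div_le_one_div_of_le hRpos hRr) hκ
  have hfb' : frontier B ∩ Ω = ∅ := by
    by_contra h
    exact absurd (hfb (nonempty_iff_ne_empty.mpr h)) (ne_of_lt h1r)
  -- B is open
  have hBopen : IsOpen B := hB ▸ isOpen_ball
  -- closure B ∩ Ω ⊆ B
  have hcl : closure B ∩ Ω ⊆ B := by
    intro y ⟨hy1, hy2⟩
    by_contra hyB
    have : y ∈ frontier B := ⟨hy1, by rwa [hBopen.interior_eq]⟩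
    exact absurd (mem_inter this hy2) (by simp [hfb'])
  -- Ω is preconnected
  have hΩpre : IsPreconnected Ω := by
    haveI := hΩsc
    haveI : PreconnectedSpace Ω := inferInstance
    exact isPreconnected_iff_preconnectedSpace.mpr this
  -- Ω ⊆ B by connectedness
  have hxB : x ∈ B := by rw [hB]; exact mem_ball_self hr
  have hsub : Ω ⊆ B := by
    apply IsPreconnected.subset_left_of_subset_union hBopen
      (isOpen_compl_iff.mpr isClosed_closure) (disjoint_compl_right.mono_left subset_closure)
      ?_ ⟨x, hBΩ hxB, hxB⟩ hΩpre
    intro y hy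
    by_cases hyc : y ∈ closure B
    · exact Or.inl (hcl ⟨hyc, hy⟩)
    · exact Or.inr hyc
  exact le_antisymm hBΩ hsub
end
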